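/- Ῡ is a gauge-type function under d_∞ (Remark 3.2(iii), inequality (3.16)): For all (l,x), (s,y) ∈ Λ̂, one has Ῡ(l,x,s,y) ≥ |x_{(s-l)∨0} - y_{(l-s)∨0}|_C^6 + |s-l|². Consequently, for each t ≥ 0 the functional ((s,x),(l,y)) ↦ Ῡ(s,x,l,y) restricted to Λ^t × Λ^t is a gauge-type function under d_∞: it is continuous, it vanishes on the diagonal, and for every ε > 0 there is δ > 0 such that Ῡ(s,x,l,y) ≤ δ implies d_∞((s,x),(l,y)) < ε. -/

import Mathlib

open Filter Topology MeasureTheory Matrix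
open scoped RealInnerProductSpace

noncomputable section

namespace PathHJB

/-- The domain `(-∞,0]` of the paths. -/
abbrev PathDom : Type := Set.Iic (0 : ℝ)

abbrev Eucl (d : ℕ) := EuclideanSpace ℝ (Fin d)

/-- Paths on `(-∞,0]` with values in `ℝ^d`. -/
abbrev Pth (d : ℕ) := PathDom → Eucl d

def zeroPt : PathDom := ⟨0, Set.self_mem_Iic⟩

/-- The sup norm `|x|_C`. -/
def normC {d : ℕ} (x : Pth d) : ℝ := ⨆ θ : PathDom, ‖x θ‖

/-- The shifted path `x_h`. -/
def shift {d : ℕ} (x : Pth d) (h : ℝ) : Pth d := fun θ =>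
  if hθ : -h ≤ θ.1 then x zeroPt
  else x ⟨θ.1 + h, Set.mem_Iic.mpr (by push_neg at hθ; linarith)⟩

/-- The vertical perturbation `x + v · 1_{{0}}`. -/
def vpert {d : ℕ} (x : Pth d) (v : Eucl d) : Pth d := fun θ =>
  if θ.1 = 0 then x θ + v else x θ

/-- Càdlàg: right-continuous with left limits. -/
def IsCadlag {d : ℕ} (x : Pth d) : Prop :=
  (∀ θ : PathDom, ContinuousWithinAt x {η : PathDom | θ.1 ≤ η.1} θ) ∧
  (∀ θ : PathDom, ∃ L : Eucl d, Tendsto x (nhdsWithin θ {η : PathDom | η.1 < θ.1}) (nhds L))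

/-- `𝒟₀`: càdlàg paths vanishing at `-∞`. -/
def D0 (d : ℕ) : Set (Pth d) := {x | IsCadlag x ∧ Tendsto x atBot (nhds 0)}

/-- `𝒞₀`: continuous paths vanishing at `-∞`. -/
def C0 (d : ℕ) : Set (Pth d) := {x | Continuous x ∧ Tendsto x atBot (nhds 0)}

/-- The metric `d_∞`. -/
def dInfty {d : ℕ} (p q : ℝ × Pth d) : ℝ :=
  if p.1 ≤ q.1 then |q.1 - p.1| + normC (shift p.2 (q.1 - p.1) - q.2)
  else |p.1 - q.1| + normC (shift q.2 (p.1 - q.1) - p.2)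

/-- `Λ̂^t = [t,∞) × 𝒟₀`. -/
def LamHat (d : ℕ) (t : ℝ) : Set (ℝ × Pth d) := {p | t ≤ p.1 ∧ p.2 ∈ D0 d}

/-- `Λ^t = [t,∞) × 𝒞₀`. -/
def Lam (d : ℕ) (t : ℝ) : Set (ℝ × Pth d) := {p | t ≤ p.1 ∧ p.2 ∈ C0 d}

def stdBasis (d : ℕ) (i : Fin d) : Eucl d := EuclideanSpace.single i 1

/-- Horizontal (Dupire) derivative. -/
def HasHorizDerivAt {d : ℕ} (f : ℝ × Pth d → ℝ) (p : ℝ × Pth d) (v : ℝ) : Prop :=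
  Tendsto (fun h : ℝ => (f (p.1 + h, shift p.2 h) - f p) / h) (𝓝[>] (0:ℝ)) (𝓝 v)

/-- Vertical (Dupire) derivative in direction `e_i`. -/
def HasVertDerivAt {d : ℕ} (f : ℝ × Pth d → ℝ) (p : ℝ × Pth d) (i : Fin d) (v : ℝ) : Prop :=
  Tendsto (fun h : ℝ => (f (p.1, vpert p.2 (h • stdBasis d i)) - f p) / h) (𝓝[≠] (0:ℝ)) (𝓝 v)

/-- Continuity on a set w.r.t. `d_∞`. -/
def DContinuousOn {d : ℕ} {E : Type*} [NormedAddCommGroup E]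
    (f : ℝ × Pth d → E) (S : Set (ℝ × Pth d)) : Prop :=
  ∀ p ∈ S, ∀ ε > (0:ℝ), ∃ δ > (0:ℝ), ∀ q ∈ S, dInfty p q < δ → ‖f q - f p‖ < ε

/-- Uniform continuity on a set w.r.t. `d_∞`. -/
def DUnifContOn {d : ℕ} {E : Type*} [NormedAddCommGroup E]
    (f : ℝ × Pth d → E) (S : Set (ℝ × Pth d)) : Prop :=
  ∀ ε > (0:ℝ), ∃ δ > (0:ℝ), ∀ p ∈ S, ∀ q ∈ S, dInfty p q < δ → ‖f q - f p‖ < ε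

def BoundedOn {d : ℕ} {E : Type*} [NormedAddCommGroup E]
    (f : ℝ × Pth d → E) (S : Set (ℝ × Pth d)) : Prop :=
  ∃ M : ℝ, ∀ p ∈ S, ‖f p‖ ≤ M

def PolyGrowthOn {d : ℕ} {E : Type*} [NormedAddCommGroup E]
    (f : ℝ × Pth d → E) (S : Set (ℝ × Pth d)) : Prop :=
  ∃ C : ℝ, ∃ k : ℕ, ∀ p ∈ S, ‖f p‖ ≤ C * (1 + |p.1| + normC p.2) ^ k

/-- `f ∈ C_p^{1,2}(Λ̂^t)`, with prescribed pathwise derivatives. -/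
structure IsCp12Hat (d : ℕ) (t : ℝ) (f : ℝ × Pth d → ℝ) (ft : ℝ × Pth d → ℝ)
    (fx : ℝ × Pth d → Eucl d) (fxx : ℝ × Pth d → Matrix (Fin d) (Fin d) ℝ) : Prop where
  horiz : ∀ p ∈ LamHat d t, HasHorizDerivAt f p (ft p)
  vert : ∀ p ∈ LamHat d t, ∀ i, HasVertDerivAt f p i (fx p i)
  vert2 : ∀ p ∈ LamHat d t, ∀ i j, HasVertDerivAt (fun q => fx q j) p i (fxx p i j)
  cont : DContinuousOn f (LamHat d t)
  cont_t : DContinuousOn ft (LamHat d t)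
  cont_x : DContinuousOn fx (LamHat d t)
  cont_xx : ∀ i j, DContinuousOn (fun p => fxx p i j) (LamHat d t)
  growth : PolyGrowthOn f (LamHat d t)
  growth_t : PolyGrowthOn ft (LamHat d t)
  growth_x : PolyGrowthOn fx (LamHat d t)
  growth_xx : ∀ i j, PolyGrowthOn (fun p => fxx p i j) (LamHat d t)

/-- Hilbert–Schmidt norm of a matrix. -/
def hsNorm {m n : ℕ} (A : Matrix (Fin m) (Fin n) ℝ) : ℝ :=
  Real.sqrt (∑ i, ∑ j, (A i j) ^ 2)

/-- The Hamiltonian `H`. -/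
def Ham {d n : ℕ} {U : Type*} (b : Pth d → U → Eucl d)
    (σ' : Pth d → U → Matrix (Fin d) (Fin n) ℝ) (q : Pth d → U → ℝ)
    (x : Pth d) (p : Eucl d) (l : Matrix (Fin d) (Fin d) ℝ) : ℝ :=
  ⨅ u : U, ((inner ℝ p (b x u) : ℝ) + (1/2) * (l * (σ' x u * (σ' x u)ᵀ)).trace + q x u)

/-- Hypothesis 4.2. -/
structure Hyp42 {d n : ℕ} {U : Type*} [PseudoMetricSpace U] (L : ℝ)
    (b : Pth d → U → Eucl d) (σ' : Pth d → U → Matrix (Fin d) (Fin n) ℝ)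
    (q : Pth d → U → ℝ) : Prop where
  pos : 0 < L
  continuous : ∀ x ∈ C0 d, ∀ u : U, ∀ ε > (0:ℝ), ∃ δ > (0:ℝ), ∀ y ∈ C0 d, ∀ u' : U,
    normC (x - y) < δ → dist u u' < δ →
    ‖b x u - b y u'‖ < ε ∧ hsNorm (σ' x u - σ' y u') < ε ∧ |q x u - q y u'| < ε
  bound_b : ∀ x ∈ C0 d, ∀ u : U, ‖b x u‖ ^ 2 ≤ L ^ 2 * (1 + normC x ^ 2)
  bound_σ : ∀ x ∈ C0 d, ∀ u : U, hsNorm (σ' x u) ^ 2 ≤ L ^ 2 * (1 + normC x ^ 2)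
  bound_q : ∀ x ∈ C0 d, ∀ u : U, (q x u) ^ 2 ≤ L ^ 2 * (1 + normC x ^ 2)
  lip_b : ∀ x ∈ C0 d, ∀ y ∈ C0 d, ∀ u : U, ‖b x u - b y u‖ ≤ L * normC (x - y)
  lip_σ : ∀ x ∈ C0 d, ∀ y ∈ C0 d, ∀ u : U, hsNorm (σ' x u - σ' y u) ≤ L * normC (x - y)
  lip_q : ∀ x ∈ C0 d, ∀ y ∈ C0 d, ∀ u : U, |q x u - q y u| ≤ L * normC (x - y)

/-- Viscosity subsolution of `-λ w + ∂_t w + H(x, ∂_x w, ∂_{xx} w) = 0`. -/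
def IsViscSubsol {d n : ℕ} {U : Type*} (lam : ℝ) (b : Pth d → U → Eucl d)
    (σ' : Pth d → U → Matrix (Fin d) (Fin n) ℝ) (q : Pth d → U → ℝ)
    (w : Pth d → ℝ) : Prop :=
  ∀ s : ℝ, 0 ≤ s → ∀ x ∈ C0 d,
    ∀ (φ φt : ℝ × Pth d → ℝ) (φx : ℝ × Pth d → Eucl d)
      (φxx : ℝ × Pth d → Matrix (Fin d) (Fin d) ℝ),
      IsCp12Hat d s φ φt φx φxx →
      w x - φ (s, x) = 0 →
      (∀ p ∈ Lam d s, w p.2 - φ p ≤ 0) →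
      0 ≤ -lam * w x + φt (s, x) + Ham b σ' q x (φx (s, x)) (φxx (s, x))

/-- Viscosity supersolution. -/
def IsViscSupersol {d n : ℕ} {U : Type*} (lam : ℝ) (b : Pth d → U → Eucl d)
    (σ' : Pth d → U → Matrix (Fin d) (Fin n) ℝ) (q : Pth d → U → ℝ)
    (w : Pth d → ℝ) : Prop :=
  ∀ s : ℝ, 0 ≤ s → ∀ x ∈ C0 d,
    ∀ (φ φt : ℝ × Pth d → ℝ) (φx : ℝ × Pth d → Eucl d)
      (φxx : ℝ × Pth d → Matrix (Fin d) (Fin d) ℝ),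
      IsCp12Hat d s φ φt φx φxx →
      w x + φ (s, x) = 0 →
      (∀ p ∈ Lam d s, 0 ≤ w p.2 + φ p) →
      -lam * w x - φt (s, x) + Ham b σ' q x (-φx (s, x)) (-φxx (s, x)) ≤ 0


/-- The two-argument functional `S_m(t,x,s,y)`. -/
def SmP {d : ℕ} (m : ℕ) (p q : ℝ × Pth d) : ℝ :=
  if normC (shift p.2 (max (q.1 - p.1) 0) - shift q.2 (max (p.1 - q.1) 0)) = 0 then 0
  else (normC (shift p.2 (max (q.1 - p.1) 0) - shift q.2 (max (p.1 - q.1) 0)) ^ (2*m)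
        - ‖p.2 zeroPt - q.2 zeroPt‖ ^ (2*m)) ^ 3
       / normC (shift p.2 (max (q.1 - p.1) 0) - shift q.2 (max (p.1 - q.1) 0)) ^ (4*m)

/-- `Υ^{m,M}(t,x,s,y)`. -/
def UpsP {d : ℕ} (m : ℕ) (M : ℝ) (p q : ℝ × Pth d) : ℝ :=
  SmP m p q + M * ‖p.2 zeroPt - q.2 zeroPt‖ ^ (2*m)

/-- `Ῡ^{m,M}(t,x,s,y) = Υ^{m,M}(t,x,s,y) + |s-t|²`. -/
def UpsBarP {d : ℕ} (m : ℕ) (M : ℝ) (p q : ℝ × Pth d) : ℝ :=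
  UpsP m M p q + (q.1 - p.1) ^ 2

/-- The single-path functional `Υ^{m,M}(x)`. -/
def Ups0 {d : ℕ} (m : ℕ) (M : ℝ) (x : Pth d) : ℝ :=
  (if normC x = 0 then 0
   else (normC x ^ (2*m) - ‖x zeroPt‖ ^ (2*m)) ^ 3 / normC x ^ (4*m))
  + M * ‖x zeroPt‖ ^ (2*m)

/-- `w̃^{t̂}` before taking the upper semicontinuous envelope:
the sup of `w(t,ξ)` over `ξ ∈ 𝒞₀` with `ξ(0) = x₀`. -/
def sliceSup {d : ℕ} (w : ℝ × Pth d → ℝ) (t : ℝ) (x0 : Eucl d) : ℝ :=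
  sSup {r : ℝ | ∃ ξ ∈ C0 d, ξ zeroPt = x0 ∧ r = w (t, ξ)}

def tildeW {d : ℕ} (w : ℝ × Pth d → ℝ) (tHat : ℝ) : ℝ × Eucl d → ℝ := fun p =>
  if tHat ≤ p.1 then sliceSup w p.1 p.2
  else sliceSup w tHat p.2 - Real.sqrt (tHat - p.1)

/-- Upper semicontinuous envelope. -/
def uscEnv {d : ℕ} (g : ℝ × Eucl d → ℝ) : ℝ × Eucl d → ℝ := fun p =>
  Filter.limsup g (nhds p)

/-- A local modulus of continuity. -/
structure LocalModulus (ρ : ℝ → ℝ → ℝ) : Prop where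
  cont : Continuous fun p : ℝ × ℝ => ρ p.1 p.2
  nonneg : ∀ t r, 0 ≤ t → 0 ≤ r → 0 ≤ ρ t r
  zero : ∀ r, 0 ≤ r → ρ 0 r = 0
  subadd : ∀ t s r, 0 ≤ t → 0 ≤ s → 0 ≤ r → ρ (t + s) r ≤ ρ t r + ρ s r
  mono : ∀ t r r', 0 ≤ t → 0 ≤ r → r ≤ r' → ρ t r ≤ ρ t r'

/-- Upper semicontinuity on a set w.r.t. `d_∞`. -/
def DUSCOn {d : ℕ} (w : ℝ × Pth d → ℝ) (S : Set (ℝ × Pth d)) : Prop :=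
  ∀ p ∈ S, ∀ ε > (0:ℝ), ∃ δ > (0:ℝ), ∀ q ∈ S, dInfty p q < δ → w q < w p + ε

def BddAboveOn {d : ℕ} (w : ℝ × Pth d → ℝ) (S : Set (ℝ × Pth d)) : Prop :=
  ∃ M : ℝ, ∀ p ∈ S, w p ≤ M

/-- `limsup_{t+|x|_C → ∞} w(t,x)/(t+|x|_C) < 0` on `Λ`. -/
def NegLimsupAtInfty {d : ℕ} (w : ℝ × Pth d → ℝ) : Prop :=
  ∃ c < (0:ℝ), ∃ R : ℝ, ∀ p ∈ Lam d 0, R ≤ p.1 + normC p.2 →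
    w p ≤ c * (p.1 + normC p.2)

/-- `φ ∈ C^{1,2}([0,∞) × ℝ^d)` with prescribed derivatives. -/
structure IsC12Fin (d : ℕ) (φ φt : ℝ × Eucl d → ℝ) (φx : ℝ × Eucl d → Eucl d)
    (φxx : ℝ × Eucl d → Matrix (Fin d) (Fin d) ℝ) : Prop where
  ht : ∀ p : ℝ × Eucl d, HasDerivAt (fun s => φ (s, p.2)) (φt p) p.1
  hx : ∀ p : ℝ × Eucl d, HasGradientAt (fun y => φ (p.1, y)) (φx p) p.2
  hxx : ∀ p : ℝ × Eucl d, ∀ i j,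
    HasDerivAt (fun h : ℝ => φx (p.1, p.2 + h • stdBasis d j) i) (φxx p i j) 0
  cont : Continuous φ
  cont_t : Continuous φt
  cont_x : Continuous φx
  cont_xx : ∀ i j, Continuous fun p => φxx p i j

/-- The class `Φ(t̂, x̂₀, T)` of Definition 6.1. -/
def PhiClass (d : ℕ) (tHat : ℝ) (xHat0 : Eucl d) (T : ℝ) (f : ℝ × Eucl d → ℝ) : Prop :=
  ∃ r > (0:ℝ), ∀ L > (0:ℝ),
    ∀ (φ φt : ℝ × Eucl d → ℝ) (φx : ℝ × Eucl d → Eucl d)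
      (φxx : ℝ × Eucl d → Matrix (Fin d) (Fin d) ℝ),
      IsC12Fin d φ φt φx φxx →
      ∀ t : ℝ, ∀ x0 : Eucl d, 0 < t → t < T →
        (∀ s : ℝ, ∀ y : Eucl d, 0 ≤ s → s ≤ T → f (s, y) - φ (s, y) ≤ f (t, x0) - φ (t, x0)) →
        ∃ C > (0:ℝ),
          (|t - tHat| + ‖x0 - xHat0‖ < r →
           |f (t, x0)| + ‖φx (t, x0)‖ + hsNorm (φxx (t, x0)) ≤ L →
           C ≤ φt (t, x0))

/-- Operator norm of a square matrix, via the associated Euclidean linear map. -/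
def matOpNorm {ι : Type*} [Fintype ι] [DecidableEq ι] (A : Matrix ι ι ℝ) : ℝ :=
  ‖LinearMap.toContinuousLinearMap (Matrix.toEuclideanLin A)‖

/-- The second-derivative matrix of `φ : ℝ^d × ℝ^d → ℝ` at a point, as a
`(2d) × (2d)` matrix indexed by `Fin d ⊕ Fin d`. -/
def hess2 {d : ℕ} (φ : Eucl d × Eucl d → ℝ) (z : Eucl d × Eucl d) :
    Matrix (Fin d ⊕ Fin d) (Fin d ⊕ Fin d) ℝ := fun k l =>
  iteratedFDeriv ℝ 2 φ z
    ![Sum.elim (fun i => ((stdBasis d i, 0) : Eucl d × Eucl d))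
        (fun j => ((0, stdBasis d j) : Eucl d × Eucl d)) k,
      Sum.elim (fun i => ((stdBasis d i, 0) : Eucl d × Eucl d))
        (fun j => ((0, stdBasis d j) : Eucl d × Eucl d)) l]

/-- Hessian matrix of `φ : ℝ^d → ℝ`. -/
def hess1 {d : ℕ} (φ : Eucl d → ℝ) (z : Eucl d) : Matrix (Fin d) (Fin d) ℝ := fun i j =>
  iteratedFDeriv ℝ 2 φ z ![stdBasis d i, stdBasis d j]


/-- The path `x - a_{t-t̂}` appearing in `S_m(t,x,t̂,a)` (for `t ≥ t̂`). -/
def zRel {d : ℕ} (tHat : ℝ) (a : Pth d) (p : ℝ × Pth d) : Pth d :=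
  shift p.2 (max (tHat - p.1) 0) - shift a (max (p.1 - tHat) 0)

/-! ### Auxiliary lemmas for `upsBar_gauge_type` -/

section GaugeAux

instance : Nonempty PathDom := ⟨zeroPt⟩

/-- Boundedness of a path. -/
def Bdd {d : ℕ} (x : Pth d) : Prop := ∃ M : ℝ, ∀ θ : PathDom, ‖x θ‖ ≤ M

lemma Bdd.bddAbove {d : ℕ} {x : Pth d} (h : Bdd x) :
    BddAbove (Set.range fun θ => ‖x θ‖) := by
  obtain ⟨M, hM⟩ := h
  exact ⟨M, by rintro r ⟨θ, rfl⟩; exact hM θ⟩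

lemma le_normC {d : ℕ} {x : Pth d} (h : Bdd x) (θ : PathDom) : ‖x θ‖ ≤ normC x :=
  le_ciSup h.bddAbove θ

lemma normC_nonneg {d : ℕ} (x : Pth d) : 0 ≤ normC x :=
  Real.iSup_nonneg fun θ => norm_nonneg _

lemma normC_le {d : ℕ} {x : Pth d} {M : ℝ} (h : ∀ θ, ‖x θ‖ ≤ M) : normC x ≤ M :=
  ciSup_le h

lemma normC_neg {d : ℕ} (x : Pth d) : normC (-x) = normC x := by
  unfold normC; simp

lemma normC_sub_rev {d : ℕ} (x y : Pth d) : normC (x - y) = normC (y - x) := by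
  rw [← normC_neg (y - x), neg_sub]

lemma normC_add_le {d : ℕ} {x y : Pth d} (hx : Bdd x) (hy : Bdd y) :
    normC (x + y) ≤ normC x + normC y :=
  normC_le fun θ => (norm_add_le _ _).trans (add_le_add (le_normC hx θ) (le_normC hy θ))

lemma path_congr {d : ℕ} (x : Pth d) {θ η : PathDom} (h : θ.1 = η.1) : x θ = x η := by
  exact congrArg x (Subtype.ext h)

lemma Bdd.sub {d : ℕ} {x y : Pth d} (hx : Bdd x) (hy : Bdd y) : Bdd (x - y) := by
  obtain ⟨M, hM⟩ := hx; obtain ⟨M', hM'⟩ := hy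
  exact ⟨M + M', fun θ => (norm_sub_le _ _).trans (add_le_add (hM θ) (hM' θ))⟩

lemma shift_zero {d : ℕ} (x : Pth d) : shift x 0 = x := by
  funext θ
  unfold shift
  split_ifs with h
  · have : θ = zeroPt := Subtype.ext (show θ.1 = (0:ℝ) from le_antisymm (Set.mem_Iic.mp θ.2) (by simpa using h))
    rw [this]
  · exact path_congr x (add_zero _)

lemma shift_apply_zeroPt {d : ℕ} (x : Pth d) {h : ℝ} (hh : 0 ≤ h) :
    shift x h zeroPt = x zeroPt := by
  unfold shift
  rw [dif_pos]
  show -h ≤ (0:ℝ)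
  linarith

lemma shift_sub {d : ℕ} (x y : Pth d) (h : ℝ) :
    shift (x - y) h = shift x h - shift y h := by
  funext θ
  simp only [shift, Pi.sub_apply]
  split_ifs <;> simp

lemma shift_shift {d : ℕ} (x : Pth d) {h k : ℝ} (hh : 0 ≤ h) (hk : 0 ≤ k) :
    shift (shift x h) k = shift x (h + k) := by
  funext θ
  simp only [shift]
  by_cases h1 : -k ≤ θ.1
  · rw [dif_pos h1, dif_pos (show -(h+k) ≤ θ.1 by linarith), dif_pos]
    show -h ≤ (0:ℝ)
    linarith
  · rw [dif_neg h1]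
    push_neg at h1
    by_cases h2 : -h ≤ θ.1 + k
    · rw [dif_pos h2, dif_pos (show -(h+k) ≤ θ.1 by linarith)]
    · rw [dif_neg h2, dif_neg (show ¬ -(h+k) ≤ θ.1 by push_neg at h2 ⊢; linarith)]
      exact path_congr x (by ring)

lemma Bdd.shift {d : ℕ} {x : Pth d} (hx : Bdd x) (h : ℝ) : Bdd (shift x h) := by
  obtain ⟨M, hM⟩ := hx
  refine ⟨M, fun θ => ?_⟩
  unfold PathHJB.shift
  split_ifs <;> apply hM

lemma normC_shift_le {d : ℕ} {x : Pth d} (hx : Bdd x) (h : ℝ) :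
    normC (shift x h) ≤ normC x := by
  refine normC_le fun θ => ?_
  unfold PathHJB.shift
  split_ifs <;> apply le_normC hx

lemma normC_shift_eq {d : ℕ} {x : Pth d} (hx : Bdd x) {h : ℝ} (hh : 0 ≤ h) :
    normC (shift x h) = normC x := by
  refine le_antisymm (normC_shift_le hx h) (normC_le fun θ => ?_)
  by_cases hθ : θ.1 = 0
  · have : θ = zeroPt := Subtype.ext hθ
    rw [this, ← shift_apply_zeroPt x hh]
    exact le_normC (hx.shift h) zeroPt
  · have hθ' : θ.1 - h ≤ 0 := by have := θ.2; simp only [Set.mem_Iic] at this; linarith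
    have key : shift x h ⟨θ.1 - h, Set.mem_Iic.mpr hθ'⟩ = x θ := by
      unfold PathHJB.shift
      rw [dif_neg]
      · exact path_congr x (by ring)
      · have h0 : θ.1 < 0 := lt_of_le_of_ne (Set.mem_Iic.mp θ.2) hθ
        push_neg
        simp only
        linarith
    rw [← key]
    exact le_normC (hx.shift h) _

/-- The path difference appearing in `S_m`. -/
def pdiff {d : ℕ} (p q : ℝ × Pth d) : Pth d :=
  shift p.2 (max (q.1 - p.1) 0) - shift q.2 (max (p.1 - q.1) 0)

lemma pdiff_swap {d : ℕ} (p q : ℝ × Pth d) : pdiff q p = -(pdiff p q) := by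
  unfold pdiff; rw [neg_sub]

lemma dInfty_eq {d : ℕ} (p q : ℝ × Pth d) :
    dInfty p q = |q.1 - p.1| + normC (pdiff p q) := by
  unfold dInfty pdiff
  split_ifs with h
  · rw [max_eq_left (by linarith), max_eq_right (by linarith), shift_zero]
  · push_neg at h
    rw [max_eq_right (by linarith), max_eq_left (by linarith), shift_zero,
      abs_sub_comm, normC_sub_rev]

lemma dInfty_symm {d : ℕ} (p q : ℝ × Pth d) : dInfty p q = dInfty q p := by
  rw [dInfty_eq, dInfty_eq, pdiff_swap, normC_neg, abs_sub_comm]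

lemma abs_time_le_dInfty {d : ℕ} (p q : ℝ × Pth d) : |q.1 - p.1| ≤ dInfty p q := by
  rw [dInfty_eq]; linarith [normC_nonneg (pdiff p q)]

lemma dInfty_nonneg {d : ℕ} (p q : ℝ × Pth d) : 0 ≤ dInfty p q :=
  le_trans (abs_nonneg _) (abs_time_le_dInfty p q)

lemma pdiff_zeroPt {d : ℕ} (p q : ℝ × Pth d) :
    pdiff p q zeroPt = p.2 zeroPt - q.2 zeroPt := by
  unfold pdiff
  rw [Pi.sub_apply, shift_apply_zeroPt _ (le_max_right _ _), shift_apply_zeroPt _ (le_max_right _ _)]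

lemma Bdd.pdiff {d : ℕ} {p q : ℝ × Pth d} (hp : Bdd p.2) (hq : Bdd q.2) :
    Bdd (pdiff p q) :=
  (hp.shift _).sub (hq.shift _)

lemma norm_zeroPt_le_normC_pdiff {d : ℕ} {p q : ℝ × Pth d} (hp : Bdd p.2) (hq : Bdd q.2) :
    ‖p.2 zeroPt - q.2 zeroPt‖ ≤ normC (pdiff p q) := by
  rw [← pdiff_zeroPt]
  exact le_normC (hp.pdiff hq) zeroPt

lemma norm_zeroPt_le_dInfty {d : ℕ} {p q : ℝ × Pth d} (hp : Bdd p.2) (hq : Bdd q.2) :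
    ‖p.2 zeroPt - q.2 zeroPt‖ ≤ dInfty p q := by
  rw [dInfty_eq]
  linarith [norm_zeroPt_le_normC_pdiff hp hq, abs_nonneg (q.1 - p.1)]

lemma Bdd.neg {d : ℕ} {x : Pth d} (hx : Bdd x) : Bdd (-x) := by
  obtain ⟨M, hM⟩ := hx
  exact ⟨M, fun θ => by simpa using hM θ⟩

lemma dInfty_triangle_of_le {d : ℕ} {p r q : ℝ × Pth d} (hx : Bdd p.2) (hz : Bdd r.2)
    (hy : Bdd q.2) (hpq : p.1 ≤ q.1) : dInfty p q ≤ dInfty p r + dInfty r q := by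
  have e1 : dInfty p q = (q.1 - p.1) + normC (shift p.2 (q.1 - p.1) - q.2) := by
    simp only [dInfty, if_pos hpq, abs_of_nonneg (by linarith : (0:ℝ) ≤ q.1 - p.1)]
  rcases le_or_gt p.1 r.1 with h1 | h1
  · rcases le_or_gt r.1 q.1 with h2 | h2
    · -- p.1 ≤ r.1 ≤ q.1
      have e2 : dInfty p r = (r.1 - p.1) + normC (shift p.2 (r.1 - p.1) - r.2) := by
        simp only [dInfty, if_pos h1, abs_of_nonneg (by linarith : (0:ℝ) ≤ r.1 - p.1)]
      have e3 : dInfty r q = (q.1 - r.1) + normC (shift r.2 (q.1 - r.1) - q.2) := by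
        simp only [dInfty, if_pos h2, abs_of_nonneg (by linarith : (0:ℝ) ≤ q.1 - r.1)]
      have hss : shift (shift p.2 (r.1 - p.1)) (q.1 - r.1) = shift p.2 (q.1 - p.1) := by
        rw [shift_shift p.2 (by linarith) (by linarith)]
        congr 1; ring
      have key : shift p.2 (q.1 - p.1) - q.2
          = shift (shift p.2 (r.1 - p.1) - r.2) (q.1 - r.1) + (shift r.2 (q.1 - r.1) - q.2) := by
        rw [shift_sub, hss]; abel
      have hb1 : Bdd (shift p.2 (r.1 - p.1) - r.2) := (hx.shift _).sub hz
      have hb2 : Bdd (shift r.2 (q.1 - r.1) - q.2) := (hz.shift _).sub hy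
      have h4 := normC_add_le (hb1.shift (q.1 - r.1)) hb2
      rw [← key] at h4
      have h5 := h4.trans (add_le_add_left (normC_shift_le hb1 _) _)
      rw [e1, e2, e3]; linarith
    · -- q.1 < r.1
      have e2 : dInfty p r = (r.1 - p.1) + normC (shift p.2 (r.1 - p.1) - r.2) := by
        simp only [dInfty, if_pos (hpq.trans h2.le),
          abs_of_nonneg (by linarith : (0:ℝ) ≤ r.1 - p.1)]
      have e3 : dInfty r q = (r.1 - q.1) + normC (shift q.2 (r.1 - q.1) - r.2) := by
        simp only [dInfty, if_neg (not_le.mpr h2),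
          abs_of_nonneg (by linarith : (0:ℝ) ≤ r.1 - q.1)]
      have h0 : normC (shift p.2 (q.1 - p.1) - q.2)
          = normC (shift p.2 (r.1 - p.1) - shift q.2 (r.1 - q.1)) := by
        rw [← normC_shift_eq ((hx.shift _).sub hy) (show (0:ℝ) ≤ r.1 - q.1 by linarith),
          shift_sub, shift_shift p.2 (by linarith) (by linarith)]
        congr 3
        ring
      have key : shift p.2 (r.1 - p.1) - shift q.2 (r.1 - q.1)
          = (shift p.2 (r.1 - p.1) - r.2) + (r.2 - shift q.2 (r.1 - q.1)) := by abel
      have hb1 : Bdd (shift p.2 (r.1 - p.1) - r.2) := (hx.shift _).sub hz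
      have hb2 : Bdd (r.2 - shift q.2 (r.1 - q.1)) := hz.sub (hy.shift _)
      have h4 := normC_add_le hb1 hb2
      rw [← key] at h4
      rw [normC_sub_rev r.2] at h4
      rw [e1, e2, e3, h0]; linarith
  · -- r.1 < p.1
    have e2 : dInfty p r = (p.1 - r.1) + normC (shift r.2 (p.1 - r.1) - p.2) := by
      simp only [dInfty, if_neg (not_le.mpr h1),
        abs_of_nonneg (by linarith : (0:ℝ) ≤ p.1 - r.1)]
    have e3 : dInfty r q = (q.1 - r.1) + normC (shift r.2 (q.1 - r.1) - q.2) := by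
      simp only [dInfty, if_pos (by linarith : r.1 ≤ q.1),
        abs_of_nonneg (by linarith : (0:ℝ) ≤ q.1 - r.1)]
    have hss : shift (shift r.2 (p.1 - r.1)) (q.1 - p.1) = shift r.2 (q.1 - r.1) := by
      rw [shift_shift r.2 (by linarith) (by linarith)]
      congr 1; ring
    have key : shift p.2 (q.1 - p.1) - q.2
        = (shift r.2 (q.1 - r.1) - q.2) + (-(shift (shift r.2 (p.1 - r.1) - p.2) (q.1 - p.1))) := by
      rw [shift_sub, hss]; abel
    have hb1 : Bdd (shift r.2 (q.1 - r.1) - q.2) := (hz.shift _).sub hy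
    have hb2 : Bdd (shift r.2 (p.1 - r.1) - p.2) := (hz.shift _).sub hx
    have h4 := normC_add_le hb1 (hb2.shift (q.1 - p.1)).neg
    rw [← key] at h4
    rw [normC_neg] at h4
    have h5 := h4.trans (add_le_add_right (normC_shift_le hb2 _) _)
    rw [e1, e2, e3]; linarith

lemma dInfty_triangle {d : ℕ} {p r q : ℝ × Pth d} (hx : Bdd p.2) (hz : Bdd r.2)
    (hy : Bdd q.2) : dInfty p q ≤ dInfty p r + dInfty r q := by
  rcases le_or_gt p.1 q.1 with h | h
  · exact dInfty_triangle_of_le hx hz hy h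
  · rw [dInfty_symm p q, dInfty_symm p r, dInfty_symm r q]
    have := dInfty_triangle_of_le hy hz hx h.le
    linarith

lemma C0_bdd {d : ℕ} {x : Pth d} (hx : x ∈ C0 d) : Bdd x := by
  obtain ⟨hc, hlim⟩ := hx
  have h1 : ∀ᶠ θ in Filter.atBot, dist (x θ) 0 < 1 := Metric.tendsto_nhds.mp hlim 1 one_pos
  obtain ⟨b, hb⟩ := Filter.eventually_atBot.mp h1
  have hKc : IsCompact {θ : PathDom | b ≤ θ} := by
    have hset : {θ : PathDom | b ≤ θ} = (Subtype.val : PathDom → ℝ) ⁻¹' Set.Icc b.1 0 := by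
      ext θ
      constructor
      · intro h; exact ⟨h, θ.2⟩
      · rintro ⟨h, -⟩; exact h
    rw [hset]
    exact (isClosed_Iic.isClosedEmbedding_subtypeVal).isCompact_preimage isCompact_Icc
  have himg : IsCompact ((fun θ => ‖x θ‖) '' {θ : PathDom | b ≤ θ}) :=
    hKc.image (continuous_norm.comp hc)
  obtain ⟨M, hM⟩ := himg.bddAbove
  refine ⟨max M 1, fun θ => ?_⟩
  rcases le_total θ b with h | h
  · have := hb θ h
    rw [dist_zero_right] at this
    exact le_trans this.le (le_max_right _ _)
  · exact le_trans (hM ⟨θ, h, rfl⟩) (le_max_left _ _)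

lemma C0_mem_D0 {d : ℕ} {x : Pth d} (hx : x ∈ C0 d) : x ∈ D0 d := by
  obtain ⟨hc, hlim⟩ := hx
  exact ⟨⟨fun θ => hc.continuousWithinAt, fun θ => ⟨x θ, hc.continuousWithinAt⟩⟩, hlim⟩

/-! ### The scalar comparison function -/

def clampR (w : ℝ) : ℝ := max 0 (min 1 w)

lemma clampR_nonneg (w : ℝ) : 0 ≤ clampR w := le_max_left _ _

lemma clampR_le_one (w : ℝ) : clampR w ≤ 1 := max_le zero_le_one (min_le_left _ _)

lemma continuous_clampR : Continuous clampR :=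
  continuous_const.max (continuous_const.min continuous_id)

def GG (w : ℝ × ℝ) : ℝ := (w.1 - w.2) * (clampR ((w.1 - w.2) / w.1)) ^ 2

def FF (z : ℝ × ℝ × ℝ) : ℝ := GG (z.1 ^ 6, z.2.1 ^ 6) + 3 * z.2.1 ^ 6 + z.2.2 ^ 2

lemma GG_eq {u b : ℝ} (hb : 0 ≤ b) (hbu : b ≤ u) : GG (u, b) = (u - b) ^ 3 / u ^ 2 := by
  rcases eq_or_lt_of_le (hb.trans hbu) with h | h
  · have hb0 : b = 0 := le_antisymm (hbu.trans h.symm.le) hb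
    simp [GG, ← h, hb0]
  · have hcl : clampR ((u - b) / u) = (u - b) / u := by
      unfold clampR
      rw [min_eq_right (by rw [div_le_one h]; linarith),
        max_eq_right (div_nonneg (by linarith) h.le)]
    simp only [GG]
    rw [hcl]
    field_simp

lemma SmP_eq_GG {d : ℕ} {p q : ℝ × Pth d}
    (h : ‖p.2 zeroPt - q.2 zeroPt‖ ≤ normC (pdiff p q)) :
    SmP 3 p q = GG (normC (pdiff p q) ^ 6, ‖p.2 zeroPt - q.2 zeroPt‖ ^ 6) := by
  have hrw : SmP 3 p q = (if normC (pdiff p q) = 0 then 0 else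
      (normC (pdiff p q) ^ 6 - ‖p.2 zeroPt - q.2 zeroPt‖ ^ 6) ^ 3 / normC (pdiff p q) ^ 12) := by
    simp only [SmP, pdiff, Nat.reduceMul]
    rfl
  rw [hrw]
  split_ifs with hN
  · rw [hN]
    simp [GG, clampR, zero_pow]
  · have hN0 : 0 < normC (pdiff p q) := lt_of_le_of_ne (normC_nonneg _) (Ne.symm hN)
    rw [GG_eq (pow_nonneg (norm_nonneg _) 6) (pow_le_pow_left₀ (norm_nonneg _) h 6)]
    congr 1
    ring

lemma UpsBarP_eq_FF {d : ℕ} {p q : ℝ × Pth d}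
    (h : ‖p.2 zeroPt - q.2 zeroPt‖ ≤ normC (pdiff p q)) :
    UpsBarP 3 3 p q
      = FF (normC (pdiff p q), ‖p.2 zeroPt - q.2 zeroPt‖, q.1 - p.1) := by
  simp only [UpsBarP, UpsP, FF]
  rw [SmP_eq_GG h]

lemma GG_contAt_pos {w : ℝ × ℝ} (hu : 0 < w.1) : ContinuousAt GG w := by
  have h1 : ContinuousAt (fun w : ℝ × ℝ => w.1 - w.2) w := continuousAt_fst.sub continuousAt_snd
  have h2 : ContinuousAt (fun w : ℝ × ℝ => (w.1 - w.2) / w.1) w :=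
    h1.div continuousAt_fst (ne_of_gt hu)
  exact h1.mul (((continuous_clampR.continuousAt).comp h2).pow 2)

lemma GG_contAt_zero : ContinuousAt GG ((0 : ℝ), (0 : ℝ)) := by
  have h0 : GG ((0 : ℝ), (0 : ℝ)) = 0 := by simp [GG]
  unfold ContinuousAt
  rw [h0]
  apply squeeze_zero_norm (a := fun w : ℝ × ℝ => |w.1 - w.2|)
  · intro w
    rw [Real.norm_eq_abs, GG, abs_mul]
    have hcl : |clampR ((w.1 - w.2) / w.1) ^ 2| ≤ 1 := by
      rw [abs_pow, abs_of_nonneg (clampR_nonneg _)]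
      exact pow_le_one₀ (clampR_nonneg _) (clampR_le_one _)
    nlinarith [abs_nonneg (w.1 - w.2)]
  · have h1 : Tendsto (fun w : ℝ × ℝ => |w.1 - w.2|) (𝓝 ((0 : ℝ), (0 : ℝ)))
        (𝓝 |((0:ℝ), (0:ℝ)).1 - ((0:ℝ), (0:ℝ)).2|) :=
      ((continuous_fst.sub continuous_snd).abs).continuousAt
    simpa using h1

lemma FF_contAt {N a τ : ℝ} (ha : 0 ≤ a) (haN : a ≤ N) :
    ContinuousAt FF ((N, a, τ) : ℝ × ℝ × ℝ) := by
  have hpair : ContinuousAt (fun z : ℝ × ℝ × ℝ => ((z.1 ^ 6, z.2.1 ^ 6) : ℝ × ℝ)) (N, a, τ) :=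
    ((continuous_fst.pow 6).prodMk ((continuous_fst.comp continuous_snd).pow 6)).continuousAt
  have hG : ContinuousAt GG ((N ^ 6, a ^ 6) : ℝ × ℝ) := by
    rcases eq_or_lt_of_le (ha.trans haN) with h | h
    · have ha0 : a = 0 := le_antisymm (haN.trans h.symm.le) ha
      have : ((N ^ 6, a ^ 6) : ℝ × ℝ) = ((0 : ℝ), (0 : ℝ)) := by
        rw [← h, ha0]; norm_num
      rw [this]
      exact GG_contAt_zero
    · exact GG_contAt_pos (by simpa using pow_pos h 6)
  have h2 : ContinuousAt (fun z : ℝ × ℝ × ℝ => 3 * z.2.1 ^ 6) (N, a, τ) :=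
    (((continuous_fst.comp continuous_snd).pow 6).const_smul (3:ℝ)).continuousAt
  have h3 : ContinuousAt (fun z : ℝ × ℝ × ℝ => z.2.2 ^ 2) (N, a, τ) :=
    ((continuous_snd.comp continuous_snd).pow 2).continuousAt
  have hGp : ContinuousAt (fun z : ℝ × ℝ × ℝ => GG (z.1 ^ 6, z.2.1 ^ 6)) (N, a, τ) :=
    ContinuousAt.comp (g := GG) (f := fun z : ℝ × ℝ × ℝ => ((z.1 ^ 6, z.2.1 ^ 6) : ℝ × ℝ)) hG hpair
  exact (hGp.add h2).add h3

lemma part1_lemma {d : ℕ} (p q : ℝ × Pth d) :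
    normC (pdiff p q) ^ 6 + (q.1 - p.1) ^ 2 ≤ UpsBarP 3 3 p q := by
  have hrw : UpsBarP 3 3 p q = (if normC (pdiff p q) = 0 then 0 else
      (normC (pdiff p q) ^ 6 - ‖p.2 zeroPt - q.2 zeroPt‖ ^ 6) ^ 3 / normC (pdiff p q) ^ 12)
      + 3 * ‖p.2 zeroPt - q.2 zeroPt‖ ^ 6 + (q.1 - p.1) ^ 2 := by
    simp only [UpsBarP, UpsP, SmP, pdiff, Nat.reduceMul]
    rfl
  rw [hrw]
  have ha : (0:ℝ) ≤ ‖p.2 zeroPt - q.2 zeroPt‖ := norm_nonneg _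
  have ha6 : (0:ℝ) ≤ ‖p.2 zeroPt - q.2 zeroPt‖ ^ 6 := pow_nonneg ha 6
  split_ifs with hN
  · rw [hN]
    norm_num
  · have hN0 : 0 < normC (pdiff p q) := lt_of_le_of_ne (normC_nonneg _) (Ne.symm hN)
    have haN : ‖p.2 zeroPt - q.2 zeroPt‖ ≤ normC (pdiff p q) := by
      by_cases hbdd : BddAbove (Set.range fun θ => ‖pdiff p q θ‖)
      · rw [← pdiff_zeroPt]
        exact le_ciSup hbdd zeroPt
      · exact absurd (Real.iSup_of_not_bddAbove hbdd) hN
    have hb6 : ‖p.2 zeroPt - q.2 zeroPt‖ ^ 6 ≤ normC (pdiff p q) ^ 6 :=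
      pow_le_pow_left₀ ha haN 6
    have h12 : (0:ℝ) < normC (pdiff p q) ^ 12 := pow_pos hN0 12
    have key : normC (pdiff p q) ^ 6 - 3 * ‖p.2 zeroPt - q.2 zeroPt‖ ^ 6
        ≤ (normC (pdiff p q) ^ 6 - ‖p.2 zeroPt - q.2 zeroPt‖ ^ 6) ^ 3
          / normC (pdiff p q) ^ 12 := by
      rw [le_div_iff₀ h12]
      have hNu : normC (pdiff p q) ^ 12 = (normC (pdiff p q) ^ 6) ^ 2 := by ring
      rw [hNu]
      nlinarith [mul_nonneg (mul_nonneg ha6 ha6)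
        (show (0:ℝ) ≤ 3 * normC (pdiff p q) ^ 6 - ‖p.2 zeroPt - q.2 zeroPt‖ ^ 6 by nlinarith)]
    linarith

end GaugeAux

/-- Remark 3.2(iii), inequality (3.16): `Ῡ` dominates
`|x_{(s-l)∨0} - y_{(l-s)∨0}|_C^6 + |s-l|²`, and hence it is a gauge-type
function under `d_∞` on each `Λ^t × Λ^t`. -/
theorem upsBar_gauge_type {d : ℕ} :
    (∀ p ∈ LamHat d 0, ∀ q ∈ LamHat d 0,
      normC (shift p.2 (max (q.1 - p.1) 0) - shift q.2 (max (p.1 - q.1) 0)) ^ 6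
        + (q.1 - p.1) ^ 2 ≤ UpsBarP 3 3 p q) ∧
    (∀ t : ℝ, 0 ≤ t →
      ((∀ p ∈ Lam d t, ∀ q ∈ Lam d t, ∀ ε > (0:ℝ), ∃ δ > (0:ℝ),
          ∀ p' ∈ Lam d t, ∀ q' ∈ Lam d t,
            dInfty p p' + dInfty q q' < δ →
            |UpsBarP 3 3 p' q' - UpsBarP 3 3 p q| < ε) ∧
       (∀ p ∈ Lam d t, UpsBarP 3 3 p p = 0) ∧
       (∀ ε > (0:ℝ), ∃ δ > (0:ℝ), ∀ p ∈ Lam d t, ∀ q ∈ Lam d t,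
          UpsBarP 3 3 p q ≤ δ → dInfty p q < ε))) := by
  refine ⟨fun p _ q _ => part1_lemma p q, fun t ht => ⟨?_, ?_, ?_⟩⟩
  · -- continuity
    intro p hp q hq ε hε
    have hbp : Bdd p.2 := C0_bdd hp.2
    have hbq : Bdd q.2 := C0_bdd hq.2
    have haN : ‖p.2 zeroPt - q.2 zeroPt‖ ≤ normC (pdiff p q) :=
      norm_zeroPt_le_normC_pdiff hbp hbq
    have hF : ContinuousAt FF (normC (pdiff p q), ‖p.2 zeroPt - q.2 zeroPt‖, q.1 - p.1) :=
      FF_contAt (norm_nonneg _) haN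
    obtain ⟨δ, hδ, hδ'⟩ := Metric.continuousAt_iff.mp hF ε hε
    refine ⟨δ / 2, by linarith, fun p' hp' q' hq' hD => ?_⟩
    have hbp' : Bdd p'.2 := C0_bdd hp'.2
    have hbq' : Bdd q'.2 := C0_bdd hq'.2
    have e1 : UpsBarP 3 3 p q
        = FF (normC (pdiff p q), ‖p.2 zeroPt - q.2 zeroPt‖, q.1 - p.1) := UpsBarP_eq_FF haN
    have e2 : UpsBarP 3 3 p' q'
        = FF (normC (pdiff p' q'), ‖p'.2 zeroPt - q'.2 zeroPt‖, q'.1 - p'.1) :=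
      UpsBarP_eq_FF (norm_zeroPt_le_normC_pdiff hbp' hbq')
    have hD1 : 0 ≤ dInfty p p' := dInfty_nonneg p p'
    have hD2 : 0 ≤ dInfty q q' := dInfty_nonneg q q'
    have hta : |p'.1 - p.1| ≤ dInfty p p' := abs_time_le_dInfty p p'
    have htb : |q'.1 - q.1| ≤ dInfty q q' := abs_time_le_dInfty q q'
    have hτ : |(q'.1 - p'.1) - (q.1 - p.1)| ≤ dInfty p p' + dInfty q q' := by
      have hrww : (q'.1 - p'.1) - (q.1 - p.1) = (q'.1 - q.1) - (p'.1 - p.1) := by ring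
      rw [hrww]
      calc |(q'.1 - q.1) - (p'.1 - p.1)| ≤ |q'.1 - q.1| + |p'.1 - p.1| := abs_sub _ _
        _ ≤ dInfty p p' + dInfty q q' := by linarith
    have hd : |dInfty p' q' - dInfty p q| ≤ dInfty p p' + dInfty q q' := by
      rw [abs_le]
      constructor
      · have t1 : dInfty p q ≤ dInfty p p' + dInfty p' q := dInfty_triangle hbp hbp' hbq
        have t2 : dInfty p' q ≤ dInfty p' q' + dInfty q' q := dInfty_triangle hbp' hbq' hbq
        rw [dInfty_symm q' q] at t2
        linarith
      · have t1 : dInfty p' q' ≤ dInfty p' p + dInfty p q' := dInfty_triangle hbp' hbp hbq'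
        have t2 : dInfty p q' ≤ dInfty p q + dInfty q q' := dInfty_triangle hbp hbq hbq'
        rw [dInfty_symm p' p] at t1
        linarith
    have hNN : |normC (pdiff p' q') - normC (pdiff p q)|
        ≤ 2 * (dInfty p p' + dInfty q q') := by
      have f1 : normC (pdiff p' q') = dInfty p' q' - |q'.1 - p'.1| := by
        rw [dInfty_eq]; ring
      have f2 : normC (pdiff p q) = dInfty p q - |q.1 - p.1| := by
        rw [dInfty_eq]; ring
      have habs := abs_abs_sub_abs_le_abs_sub (q'.1 - p'.1) (q.1 - p.1)
      rw [f1, f2]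
      have hrww : (dInfty p' q' - |q'.1 - p'.1|) - (dInfty p q - |q.1 - p.1|)
          = (dInfty p' q' - dInfty p q) - (|q'.1 - p'.1| - |q.1 - p.1|) := by ring
      rw [hrww]
      have hsplit := abs_sub (dInfty p' q' - dInfty p q) (|q'.1 - p'.1| - |q.1 - p.1|)
      linarith
    have haa : |‖p'.2 zeroPt - q'.2 zeroPt‖ - ‖p.2 zeroPt - q.2 zeroPt‖|
        ≤ dInfty p p' + dInfty q q' := by
      have h1 : |‖p'.2 zeroPt - q'.2 zeroPt‖ - ‖p.2 zeroPt - q.2 zeroPt‖|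
          ≤ ‖(p'.2 zeroPt - q'.2 zeroPt) - (p.2 zeroPt - q.2 zeroPt)‖ :=
        abs_norm_sub_norm_le _ _
      have hrww : (p'.2 zeroPt - q'.2 zeroPt) - (p.2 zeroPt - q.2 zeroPt)
          = (p'.2 zeroPt - p.2 zeroPt) - (q'.2 zeroPt - q.2 zeroPt) := by abel
      rw [hrww] at h1
      have h2 : ‖(p'.2 zeroPt - p.2 zeroPt) - (q'.2 zeroPt - q.2 zeroPt)‖
          ≤ ‖p'.2 zeroPt - p.2 zeroPt‖ + ‖q'.2 zeroPt - q.2 zeroPt‖ := norm_sub_le _ _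
      have h3 : ‖p'.2 zeroPt - p.2 zeroPt‖ ≤ dInfty p p' := by
        rw [norm_sub_rev]; exact norm_zeroPt_le_dInfty hbp hbp'
      have h4 : ‖q'.2 zeroPt - q.2 zeroPt‖ ≤ dInfty q q' := by
        rw [norm_sub_rev]; exact norm_zeroPt_le_dInfty hbq hbq'
      linarith
    rw [e1, e2]
    have hdist : dist
        ((normC (pdiff p' q'), ‖p'.2 zeroPt - q'.2 zeroPt‖, q'.1 - p'.1) : ℝ × ℝ × ℝ)
        ((normC (pdiff p q), ‖p.2 zeroPt - q.2 zeroPt‖, q.1 - p.1) : ℝ × ℝ × ℝ) < δ := by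
      rw [Prod.dist_eq, Prod.dist_eq]
      simp only [Real.dist_eq]
      apply max_lt
      · linarith
      · apply max_lt <;> linarith
    have hfin := hδ' hdist
    rw [Real.dist_eq] at hfin
    exact hfin
  · -- vanishes on the diagonal
    intro p hp
    have h0 : normC (0 : Pth d) = 0 := by
      unfold normC
      simp only [Pi.zero_apply, norm_zero, ciSup_const]
    simp [UpsBarP, UpsP, SmP, h0]
  · -- gauge property
    intro ε hε
    refine ⟨min ((ε / 3) ^ 6) ((ε / 3) ^ 2), lt_min (by positivity) (by positivity),
      fun p hp q hq hU => ?_⟩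
    have h1 := part1_lemma p q
    have hN : 0 ≤ normC (pdiff p q) := normC_nonneg _
    have hτ2 : 0 ≤ (q.1 - p.1) ^ 2 := sq_nonneg _
    have hN6 : normC (pdiff p q) ^ 6 ≤ (ε / 3) ^ 6 := by
      have hm := min_le_left ((ε / 3) ^ 6) ((ε / 3) ^ 2)
      have hUP : UpsBarP 3 3 p q ≤ min ((ε / 3) ^ 6) ((ε / 3) ^ 2) := hU
      linarith
    have hτ : (q.1 - p.1) ^ 2 ≤ (ε / 3) ^ 2 := by
      have hm := min_le_right ((ε / 3) ^ 6) ((ε / 3) ^ 2)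
      have hN60 : 0 ≤ normC (pdiff p q) ^ 6 := pow_nonneg hN 6
      linarith
    have hNe : normC (pdiff p q) ≤ ε / 3 :=
      le_of_pow_le_pow_left₀ (by norm_num) (by positivity) hN6
    have hτe : |q.1 - p.1| ≤ ε / 3 := by
      have h2 : |q.1 - p.1| ^ 2 ≤ (ε / 3) ^ 2 := by rw [sq_abs]; exact hτ
      exact le_of_pow_le_pow_left₀ (by norm_num) (by positivity) h2
    rw [dInfty_eq]
    linarith

end PathHJB
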